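/- Let k, n ≥ 1, let Q ∈ M_n(ℂ) and R ∈ M_{kn}(ℂ) ≅ M_k(ℂ)⊗M_n(ℂ) be orthogonal projections (Hermitian idempotents) with R ≤ 1_k⊗Q, and suppose the unital corner map from Q·M_n(ℂ)·Q to R·M_{kn}(ℂ)·R sending Y ↦ R(1_k⊗Y)R is multiplicative: R(1_k⊗Y)R(1_k⊗Y')R = R(1_k⊗YY')R for all Y, Y' ∈ Q·M_n(ℂ)·Q. Then there exists an orthogonal projection T ∈ M_k(ℂ) such that R = T⊗Q, and consequently R(1_k⊗Y)R = T⊗Y for all Y ∈ Q·M_n(ℂ)·Q. -/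

import Mathlib

open Matrix Kronecker ComplexOrder

private lemma stmt18_kronCT {l m p q : Type*} (A : Matrix l m ℂ) (B : Matrix p q ℂ) :
    (A ⊗ₖ B)ᴴ = Aᴴ ⊗ₖ Bᴴ := by
  ext ⟨i,a⟩ ⟨j,b⟩
  simp [conjTranspose_apply, star_mul', mul_comm]

private lemma stmt18_psdNeg {m : Type*} [Fintype m] [DecidableEq m] {N : Matrix m m ℂ}
    (h1 : N.PosSemidef) (h2 : (-N).PosSemidef) : N = 0 := by
  have hv : ∀ x, N *ᵥ x = 0 := by
    intro x
    refine (h1.dotProduct_mulVec_zero_iff x).mp (le_antisymm ?_ (h1.dotProduct_mulVec_nonneg x))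
    have := h2.dotProduct_mulVec_nonneg x
    simp only [neg_mulVec, dotProduct_neg] at this
    exact neg_nonneg.mp this
  ext i j
  have := congrFun (hv (Pi.single j 1)) i
  simpa [Matrix.mulVec_single] using this

/-- If `Q ∈ M_n(ℂ)` and `R ∈ M_{kn}(ℂ)` are orthogonal projections with
`R ≤ 1_k ⊗ Q` (Loewner order) and the unital corner map `Y ↦ R(1_k ⊗ Y)R` from
`Q·M_n(ℂ)·Q` to `R·M_{kn}(ℂ)·R` is multiplicative, then `R = T ⊗ Q` for some orthogonal
projection `T ∈ M_k(ℂ)`, and consequently `R(1_k ⊗ Y)R = T ⊗ Y` for all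
`Y ∈ Q·M_n(ℂ)·Q`. -/
theorem stmt_18 (k n : ℕ) (hk : 1 ≤ k) (hn : 1 ≤ n)
    (Q : Matrix (Fin n) (Fin n) ℂ) (hQherm : Qᴴ = Q) (hQidem : Q * Q = Q)
    (R : Matrix (Fin k × Fin n) (Fin k × Fin n) ℂ) (hRherm : Rᴴ = R) (hRidem : R * R = R)
    (hRQ : (((1 : Matrix (Fin k) (Fin k) ℂ) ⊗ₖ Q) - R).PosSemidef)
    (hmul : ∀ Y Y' : Matrix (Fin n) (Fin n) ℂ,
      (∃ B, Y = Q * B * Q) → (∃ B', Y' = Q * B' * Q) →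
      R * ((1 : Matrix (Fin k) (Fin k) ℂ) ⊗ₖ Y) * R *
          ((1 : Matrix (Fin k) (Fin k) ℂ) ⊗ₖ Y') * R
        = R * ((1 : Matrix (Fin k) (Fin k) ℂ) ⊗ₖ (Y * Y')) * R) :
    ∃ T : Matrix (Fin k) (Fin k) ℂ, Tᴴ = T ∧ T * T = T ∧ R = T ⊗ₖ Q ∧
      ∀ Y : Matrix (Fin n) (Fin n) ℂ, (∃ B, Y = Q * B * Q) →
        R * ((1 : Matrix (Fin k) (Fin k) ℂ) ⊗ₖ Y) * R = T ⊗ₖ Y := by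
  set P : Matrix (Fin k × Fin n) (Fin k × Fin n) ℂ := (1 : Matrix (Fin k) (Fin k) ℂ) ⊗ₖ Q with hP
  have hPherm : Pᴴ = P := by rw [hP, stmt18_kronCT, conjTranspose_one, hQherm]
  have hPidem : P * P = P := by rw [hP, ← mul_kronecker_mul, one_mul, hQidem]
  -- Step 1 : `P * R = R` and `R * P = R`
  have hXX : (P * R - R)ᴴ * (P * R - R) = -(R * (P - R) * R) := by
    rw [conjTranspose_sub, conjTranspose_mul, hRherm, hPherm]
    have h1 : R * P * (P * R) = R * (P * R) := by
      rw [mul_assoc R P, ← mul_assoc P P, hPidem]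
    simp only [Matrix.sub_mul, Matrix.mul_sub, h1, hRidem]
    rw [mul_assoc R P R]
    abel
  have hNpsd : (R * (P - R) * R).PosSemidef := by
    simpa [hRherm] using hRQ.mul_mul_conjTranspose_same R
  have hN0 : R * (P - R) * R = 0 :=
    stmt18_psdNeg hNpsd (hXX ▸ posSemidef_conjTranspose_mul_self _)
  have hPR : P * R = R := by
    have h0 : (P * R - R)ᴴ * (P * R - R) = 0 := by rw [hXX, hN0, neg_zero]
    exact sub_eq_zero.mp (conjTranspose_mul_self_eq_zero.mp h0)
  have hRP : R * P = R := by
    have := congrArg conjTranspose hPR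
    rwa [conjTranspose_mul, hPherm, hRherm] at this
  -- corner algebra facts
  have hcorner_herm : ∀ Y : Matrix (Fin n) (Fin n) ℂ, (∃ B, Y = Q * B * Q) →
      (∃ B, Yᴴ = Q * B * Q) := by
    rintro Y ⟨B, rfl⟩
    exact ⟨Bᴴ, by rw [conjTranspose_mul, conjTranspose_mul, hQherm, mul_assoc]⟩
  have hQY : ∀ Y : Matrix (Fin n) (Fin n) ℂ, (∃ B, Y = Q * B * Q) → Q * Y = Y := by
    rintro Y ⟨B, rfl⟩
    rw [← mul_assoc, ← mul_assoc, hQidem]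
  -- Step 2 : `R` commutes with `1 ⊗ₖ Y` for `Y` in the corner algebra
  have hPRidem : (P - R) * (P - R) = P - R := by
    simp only [Matrix.mul_sub, Matrix.sub_mul, hPidem, hPR, hRP, hRidem]
    abel
  have half : ∀ Y : Matrix (Fin n) (Fin n) ℂ, (∃ B, Y = Q * B * Q) →
      ((1 : Matrix (Fin k) (Fin k) ℂ) ⊗ₖ Y) * R
        = R * ((1 : Matrix (Fin k) (Fin k) ℂ) ⊗ₖ Y) * R := by
    intro Y hY
    set Y1 : Matrix (Fin k × Fin n) (Fin k × Fin n) ℂ :=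
      (1 : Matrix (Fin k) (Fin k) ℂ) ⊗ₖ Y with hY1
    set Y2 : Matrix (Fin k × Fin n) (Fin k × Fin n) ℂ :=
      (1 : Matrix (Fin k) (Fin k) ℂ) ⊗ₖ Yᴴ with hY2
    have hYhQ : Yᴴ * Q = Yᴴ := by
      obtain ⟨B, hB⟩ := hcorner_herm Y hY
      rw [hB, mul_assoc, hQidem]
    have e1 : ((P - R) * (Y1 * R))ᴴ = R * Y2 * (P - R) := by
      rw [conjTranspose_mul, conjTranspose_mul, conjTranspose_sub, hPherm, hRherm,
        hY1, hY2, stmt18_kronCT, conjTranspose_one, mul_assoc]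
    have key : R * Y2 * P = R * Y2 := by
      rw [hY2, hP, mul_assoc, ← mul_kronecker_mul, one_mul, hYhQ]
    have first : R * Y2 * (Y1 * R) = R * ((1 : Matrix (Fin k) (Fin k) ℂ) ⊗ₖ (Yᴴ * Y)) * R := by
      rw [← mul_assoc, mul_assoc R Y2 Y1, hY1, hY2, ← mul_kronecker_mul, one_mul]
    have hXX2 : ((P - R) * (Y1 * R))ᴴ * ((P - R) * (Y1 * R)) = 0 := by
      rw [e1, mul_assoc (R * Y2), ← mul_assoc (P - R), hPRidem, ← mul_assoc (R * Y2),
        Matrix.mul_sub, Matrix.sub_mul, key, first]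
      have second : R * Y2 * R * (Y1 * R)
          = R * ((1 : Matrix (Fin k) (Fin k) ℂ) ⊗ₖ (Yᴴ * Y)) * R := by
        rw [← mul_assoc, hY1, hY2, hmul Yᴴ Y (hcorner_herm Y hY) hY]
      rw [second, sub_self]
    have hX0 : (P - R) * (Y1 * R) = 0 := conjTranspose_mul_self_eq_zero.mp hXX2
    rw [Matrix.sub_mul] at hX0
    have h5 := sub_eq_zero.mp hX0
    have hPY : P * Y1 = Y1 := by
      rw [hP, hY1, ← mul_kronecker_mul, one_mul, hQY Y hY]
    rw [← mul_assoc, hPY] at h5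
    rw [h5, mul_assoc]
  have comm : ∀ Y : Matrix (Fin n) (Fin n) ℂ, (∃ B, Y = Q * B * Q) →
      ((1 : Matrix (Fin k) (Fin k) ℂ) ⊗ₖ Y) * R
        = R * ((1 : Matrix (Fin k) (Fin k) ℂ) ⊗ₖ Y) := by
    intro Y hY
    have h1 := half Y hY
    have h2 := half Yᴴ (hcorner_herm Y hY)
    have h3 := congrArg conjTranspose h2
    rw [conjTranspose_mul, conjTranspose_mul, conjTranspose_mul, hRherm, stmt18_kronCT,
      conjTranspose_one, conjTranspose_conjTranspose, ← mul_assoc] at h3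
    rw [h1, ← h3]
  -- Degenerate case `Q = 0`
  by_cases hQ0 : Q = 0
  · have hR0 : R = 0 := by
      rw [← hPR, hP, hQ0]
      simp
    refine ⟨0, by simp, by simp, ?_, ?_⟩
    · rw [hR0]
      simp [Matrix.kroneckerMap]
      rfl
    · intro Y _
      rw [hR0]
      simp [Matrix.kroneckerMap]
      rfl
  -- Step 3 : the entrywise identity
  have hcomm2 : ∀ E : Matrix (Fin n) (Fin n) ℂ,
      P * ((1 : Matrix (Fin k) (Fin k) ℂ) ⊗ₖ E) * R
        = R * (((1 : Matrix (Fin k) (Fin k) ℂ) ⊗ₖ E) * P) := by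
    intro E
    have h := comm (Q * E * Q) ⟨E, rfl⟩
    have e : (1 : Matrix (Fin k) (Fin k) ℂ) ⊗ₖ (Q * E * Q)
        = P * ((1 : Matrix (Fin k) (Fin k) ℂ) ⊗ₖ E) * P := by
      rw [hP, ← mul_kronecker_mul, one_mul, ← mul_kronecker_mul, one_mul]
    rw [e] at h
    rw [mul_assoc (P * _) P R, hPR] at h
    rw [← mul_assoc R (P * _) P, ← mul_assoc R P _, hRP, mul_assoc R _ P] at h
    exact h
  have entry : ∀ (i j : Fin k) (a b c d : Fin n),
      Q a c * R (i,d) (j,b) = R (i,a) (j,c) * Q d b := by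
    intro i j a b c d
    set E : Matrix (Fin n) (Fin n) ℂ := Matrix.single c d (1:ℂ) with hE
    have h := hcomm2 E
    rw [mul_assoc, ← mul_assoc R _ P] at h
    set N1 : Matrix (Fin k × Fin n) (Fin k × Fin n) ℂ :=
      ((1 : Matrix (Fin k) (Fin k) ℂ) ⊗ₖ E) * R with hN1
    set N2 : Matrix (Fin k × Fin n) (Fin k × Fin n) ℂ :=
      R * ((1 : Matrix (Fin k) (Fin k) ℂ) ⊗ₖ E) with hN2
    have hLe : ∀ (l : Fin k) (e : Fin n) (y : Fin k × Fin n),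
        N1 (l,e) y = if e = c then R (l,d) y else 0 := by
      intro l e y
      rw [hN1, hE]
      simp [mul_apply, Fintype.sum_prod_type, one_apply, Matrix.single, of_apply, ite_and,
        eq_comm, Finset.sum_ite_eq, Finset.sum_ite_eq']
    have hRi : ∀ (y : Fin k × Fin n) (l : Fin k) (e : Fin n),
        N2 y (l,e) = if e = d then R y (l,c) else 0 := by
      intro y l e
      rw [hN2, hE]
      simp [mul_apply, Fintype.sum_prod_type, one_apply, Matrix.single, of_apply, ite_and,
        eq_comm, Finset.sum_ite_eq, Finset.sum_ite_eq']
    have h' := Matrix.ext_iff.mpr h (i,a) (j,b)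
    rw [hP] at h'
    simp only [mul_apply, Fintype.sum_prod_type] at h'
    simp only [kroneckerMap_apply, one_apply, hLe, hRi] at h'
    simpa [ite_and, mul_ite, ite_mul, zero_mul, mul_zero, Finset.sum_ite_eq, Finset.sum_ite_eq',
      eq_comm] using h'
  -- Step 4 : extract `T`
  obtain ⟨a₀, b₀, hq⟩ : ∃ a b, Q a b ≠ 0 := by
    by_contra hc
    push_neg at hc
    exact hQ0 (by ext a b; simpa using hc a b)
  set T : Matrix (Fin k) (Fin k) ℂ := of fun i j => R (i,a₀) (j,b₀) / Q a₀ b₀ with hT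
  have hR_eq : R = T ⊗ₖ Q := by
    ext ⟨i,a⟩ ⟨j,b⟩
    have h := entry i j a₀ b b₀ a
    simp only [kroneckerMap_apply, hT, of_apply]
    field_simp
    linear_combination h
  have hcancel : ∀ A B : Matrix (Fin k) (Fin k) ℂ, A ⊗ₖ Q = B ⊗ₖ Q → A = B := by
    intro A B hAB
    ext i j
    have := Matrix.ext_iff.mpr hAB (i,a₀) (j,b₀)
    simp only [kroneckerMap_apply] at this
    exact mul_right_cancel₀ hq this
  have hTherm : Tᴴ = T := by
    refine hcancel _ _ ?_
    conv_lhs => rw [← hQherm, ← stmt18_kronCT, ← hR_eq, hRherm, hR_eq]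
  have hTidem : T * T = T := by
    refine hcancel _ _ ?_
    conv_lhs => rw [← hQidem, mul_kronecker_mul, ← hR_eq, hRidem, hR_eq]
  refine ⟨T, hTherm, hTidem, hR_eq, ?_⟩
  rintro Y ⟨B, rfl⟩
  have hQYQ : Q * (Q * B * Q) * Q = Q * B * Q := by
    have h1 : Q * (Q * B * Q) = Q * B * Q := by rw [← mul_assoc, ← mul_assoc, hQidem]
    have h2 : Q * B * Q * Q = Q * B * Q := by rw [mul_assoc (Q*B), hQidem]
    rw [h1, h2]
  rw [hR_eq, ← mul_kronecker_mul, ← mul_kronecker_mul, mul_one, hTidem, hQYQ]
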